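/- arXiv:0805.2882 — 6 statements merged into one kernel-verified Lean document; each statement's English description precedes it below -/
import Mathlib

section
/- Let ρ, ρ_d : ℝ → Matrix (Fin n) (Fin n) ℂ be differentiable and satisfy ρ'(t) = −i[H₀ + f(t)·H₁, ρ(t)] and ρ_d'(t) = −i[H₀, ρ_d(t)], where f(t) = κ·Re(Tr([−iH₁, ρ(t)]·ρ_d(t))) with κ > 0, and suppose ρ(0) and ρ_d(0) are Hermitian. Then the function t ↦ ½ Re(Tr((ρ(t) − ρ_d(t))²)) is nonincreasing on [0,∞), nonnegative, and converges to a limit L ≥ 0 as t → +∞. -/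
open Matrix Complex

lemma hasDerivAt_trace_mul {n : ℕ} (A B : ℝ → Matrix (Fin n) (Fin n) ℂ)
    (A' B' : Matrix (Fin n) (Fin n) ℂ) (t : ℝ)
    (hA : ∀ i j, HasDerivAt (fun s => A s i j) (A' i j) t)
    (hB : ∀ i j, HasDerivAt (fun s => B s i j) (B' i j) t) :
    HasDerivAt (fun s => Matrix.trace (A s * B s))
      (Matrix.trace (A' * B t) + Matrix.trace (A t * B')) t := by
  have h : ∀ s, Matrix.trace (A s * B s) = ∑ i : Fin n, ∑ j : Fin n, A s i j * B s j i := by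
    intro s; simp [Matrix.trace, Matrix.diag, Matrix.mul_apply]
  have h2 : Matrix.trace (A' * B t) + Matrix.trace (A t * B') =
      ∑ i : Fin n, ∑ j : Fin n, (A' i j * B t j i + A t i j * B' j i) := by
    simp [Matrix.trace, Matrix.diag, Matrix.mul_apply, Finset.sum_add_distrib]
  rw [h2]
  simp only [h]
  exact HasDerivAt.fun_sum (fun i _ => HasDerivAt.fun_sum (fun j _ => (hA i j).mul (hB j i)))

lemma re_trace_conjTranspose_mul {n : ℕ} (M : Matrix (Fin n) (Fin n) ℂ) :
    (Matrix.trace (Mᴴ * M)).re = ∑ i : Fin n, ∑ j : Fin n, Complex.normSq (M j i) := by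
  simp only [Matrix.trace, Matrix.diag, Matrix.mul_apply, Matrix.conjTranspose_apply]
  rw [Complex.re_sum]
  congr 1; ext i
  rw [Complex.re_sum]
  congr 1; ext j
  simp [Complex.star_def, Complex.mul_re, Complex.normSq_apply]

lemma trace_comm_zero {n : ℕ} (E X : Matrix (Fin n) (Fin n) ℂ) :
    Matrix.trace (E * (X * E - E * X)) = 0 := by
  rw [Matrix.mul_sub, Matrix.trace_sub, ← Matrix.mul_assoc, ← Matrix.mul_assoc,
    Matrix.trace_mul_cycle E X E]
  ring

lemma herm_prop {n : ℕ} (H : ℝ → Matrix (Fin n) (Fin n) ℂ)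
    (hH : ∀ t, (H t).IsHermitian)
    (X : ℝ → Matrix (Fin n) (Fin n) ℂ)
    (hX : ∀ t, ∀ i j, HasDerivAt (fun s => X s i j)
      (((-Complex.I) • (H t * X t - X t * H t)) i j) t)
    (h0 : (X 0).IsHermitian) : ∀ t, (X t).IsHermitian := by
  set D : ℝ → Matrix (Fin n) (Fin n) ℂ := fun s => (X s)ᴴ - X s with hD
  set D' : ℝ → Matrix (Fin n) (Fin n) ℂ :=
    fun t => (-Complex.I) • (H t * D t - D t * H t) with hDd
  have hD' : ∀ t, ∀ i j, HasDerivAt (fun s => D s i j) (D' t i j) t := by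
    intro t i j
    have h1 : HasDerivAt (fun s => star (X s j i))
        (star (((-Complex.I) • (H t * X t - X t * H t)) j i)) t := (hX t j i).star
    have h2 := h1.sub (hX t i j)
    convert h2 using 1
    rfl
    rfl
    have : D' t = ((-Complex.I) • (H t * (X t) - (X t) * H t))ᴴ
        - ((-Complex.I) • (H t * X t - X t * H t)) := by
      rw [conjTranspose_smul, conjTranspose_sub, conjTranspose_mul, conjTranspose_mul,
        (hH t).eq]
      simp only [hDd, hD, Matrix.mul_sub, Matrix.sub_mul, smul_sub, star_neg, Complex.star_def,
        Complex.conj_I]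
      module
    rw [this]
    simp [Matrix.sub_apply, Matrix.conjTranspose_apply, Matrix.smul_apply,
      Matrix.mul_apply, map_sum, mul_comm]
  set W : ℝ → ℝ := fun s => (Matrix.trace ((D s)ᴴ * (D s))).re with hW
  have hWd : ∀ t, HasDerivAt W 0 t := by
    intro t
    have hAd : ∀ i j, HasDerivAt (fun s => (D s)ᴴ i j) (((D' t)ᴴ) i j) t := by
      intro i j
      simpa [Matrix.conjTranspose_apply] using (hD' t j i).star
    have h := hasDerivAt_trace_mul (fun s => (D s)ᴴ) D _ _ t hAd (hD' t)
    have h2 := Complex.reCLM.hasFDerivAt.comp_hasDerivAt t h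
    have hval : (Matrix.trace ((D' t)ᴴ * D t) + Matrix.trace ((D t)ᴴ * D' t)).re = 0 := by
      have e1 : Matrix.trace ((D' t)ᴴ * D t) = star (Matrix.trace ((D t)ᴴ * D' t)) := by
        rw [← Matrix.trace_conjTranspose, conjTranspose_mul, conjTranspose_conjTranspose]
      set w : ℂ := Matrix.trace ((D t)ᴴ * (H t * D t)) - Matrix.trace ((D t)ᴴ * (D t * H t))
        with hw
      have e2 : Matrix.trace ((D t)ᴴ * D' t) = (-Complex.I) * w := by
        simp only [hDd, Matrix.mul_smul, Matrix.trace_smul, smul_eq_mul, Matrix.mul_sub,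
          Matrix.trace_sub, hw]
      have hwreal : star w = w := by
        have s1 : star (Matrix.trace ((D t)ᴴ * (H t * D t)))
            = Matrix.trace ((D t)ᴴ * (H t * D t)) := by
          rw [← Matrix.trace_conjTranspose, conjTranspose_mul, conjTranspose_mul,
            conjTranspose_conjTranspose, (hH t).eq, ← Matrix.mul_assoc,
            Matrix.trace_mul_cycle]
        have s2 : star (Matrix.trace ((D t)ᴴ * (D t * H t)))
            = Matrix.trace ((D t)ᴴ * (D t * H t)) := by
          rw [← Matrix.trace_conjTranspose, conjTranspose_mul, conjTranspose_mul,
            conjTranspose_conjTranspose, (hH t).eq, ← Matrix.mul_assoc]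
          exact (Matrix.trace_mul_cycle ((D t)ᴴ) (D t) (H t)).symm
        simp [hw, star_sub, s1, s2]
      rw [e1, e2]
      have him : w.im = 0 := by
        have h := congrArg Complex.im hwreal
        simp at h
        linarith
      simp [Complex.add_re, Complex.mul_re, him]
    have : HasDerivAt W ((Matrix.trace ((D' t)ᴴ * D t) + Matrix.trace ((D t)ᴴ * D' t)).re) t := h2
    rwa [hval] at this
  have hWconst : ∀ t, W t = W 0 := by
    intro t
    exact is_const_of_deriv_eq_zero (fun x => (hWd x).differentiableAt)
      (fun x => (hWd x).deriv) t 0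
  have hW0 : W 0 = 0 := by
    simp [hW, hD, h0.eq]
  intro t
  have hWt : W t = 0 := by rw [hWconst t, hW0]
  have hsum : (∑ i : Fin n, ∑ j : Fin n, Complex.normSq (D t j i)) = 0 := by
    rw [← re_trace_conjTranspose_mul]
    exact hWt
  have hzero : ∀ i j, D t i j = 0 := by
    intro i j
    have h1 : ∀ i ∈ Finset.univ, (0:ℝ) ≤ ∑ j : Fin n, Complex.normSq (D t j i) :=
      fun i _ => Finset.sum_nonneg fun j _ => Complex.normSq_nonneg _
    have h2 := (Finset.sum_eq_zero_iff_of_nonneg h1).mp hsum j (Finset.mem_univ j)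
    have h3 := (Finset.sum_eq_zero_iff_of_nonneg
      (fun k _ => Complex.normSq_nonneg (D t k j))).mp h2 i (Finset.mem_univ i)
    exact Complex.normSq_eq_zero.mp h3
  have hDt : D t = 0 := by ext i j; exact hzero i j
  exact sub_eq_zero.mp hDt

/-- With the Lyapunov feedback law and Hermitian initial conditions,
`V(t) = ½ Re Tr((ρ(t) - ρ_d(t))²)` is nonincreasing on `[0,∞)`, nonnegative there,
and converges to a limit `L ≥ 0` as `t → +∞`. -/
theorem stmt1 {n : ℕ} (hn : 2 ≤ n) (H₀ H₁ : Matrix (Fin n) (Fin n) ℂ)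
    (hH₀ : H₀.IsHermitian) (hH₁ : H₁.IsHermitian)
    (κ : ℝ) (hκ : 0 < κ)
    (ρ ρd : ℝ → Matrix (Fin n) (Fin n) ℂ)
    (f : ℝ → ℝ)
    (hf : ∀ t, f t =
      κ * (Matrix.trace (((-Complex.I) • (H₁ * ρ t - ρ t * H₁)) * ρd t)).re)
    (hρ : ∀ t, ∀ i j : Fin n, HasDerivAt (fun s => ρ s i j)
      (((-Complex.I) • ((H₀ + (f t : ℂ) • H₁) * ρ t - ρ t * (H₀ + (f t : ℂ) • H₁))) i j) t)
    (hρd : ∀ t, ∀ i j : Fin n, HasDerivAt (fun s => ρd s i j)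
      (((-Complex.I) • (H₀ * ρd t - ρd t * H₀)) i j) t)
    (hρ0 : (ρ 0).IsHermitian) (hρd0 : (ρd 0).IsHermitian)
    (V : ℝ → ℝ)
    (hV : ∀ t, V t = (1 / 2 : ℝ) * (Matrix.trace ((ρ t - ρd t) ^ 2)).re) :
    AntitoneOn V (Set.Ici (0 : ℝ)) ∧ (∀ t ∈ Set.Ici (0 : ℝ), 0 ≤ V t) ∧
      ∃ L : ℝ, 0 ≤ L ∧ Filter.Tendsto V Filter.atTop (nhds L) := by
  set E : ℝ → Matrix (Fin n) (Fin n) ℂ := fun s => ρ s - ρd s with hE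
  set E' : ℝ → Matrix (Fin n) (Fin n) ℂ := fun t =>
    (-Complex.I) • ((H₀ + (f t : ℂ) • H₁) * ρ t - ρ t * (H₀ + (f t : ℂ) • H₁))
    - (-Complex.I) • (H₀ * ρd t - ρd t * H₀) with hE'def
  have hE' : ∀ t, ∀ i j, HasDerivAt (fun s => E s i j) (E' t i j) t := by
    intro t i j
    have := (hρ t i j).sub (hρd t i j)
    simp [hE, hE'def, Matrix.sub_apply] at this ⊢
    exact this
  -- decomposition of E'
  have hdec : ∀ t, E' t = (-Complex.I) • (H₀ * E t - E t * H₀)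
      + (-(Complex.I * (f t : ℂ))) • (H₁ * ρ t - ρ t * H₁) := by
    intro t
    simp only [hE'def, hE, Matrix.add_mul, Matrix.mul_add, Matrix.smul_mul, Matrix.mul_smul,
      Matrix.sub_mul, Matrix.mul_sub, smul_sub, smul_add, smul_smul]
    module
  -- the derivative of V
  have derV : ∀ t, HasDerivAt V (-(f t) ^ 2 / κ) t := by
    intro t
    have h := hasDerivAt_trace_mul E E (E' t) (E' t) t (hE' t) (hE' t)
    have h2 := Complex.reCLM.hasFDerivAt.comp_hasDerivAt t h
    have h3 := h2.const_mul (1 / 2 : ℝ)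
    have hVeq : V = fun s => (1 / 2 : ℝ) * Complex.reCLM (Matrix.trace (E s * E s)) := by
      funext s
      rw [hV s]
      simp [hE, sq]
    set z : ℂ := Matrix.trace ((H₁ * ρ t - ρ t * H₁) * ρd t) with hz
    have key : Matrix.trace (E t * E' t) = Complex.I * (f t : ℂ) * z := by
      rw [hdec t, Matrix.mul_add, Matrix.trace_add, Matrix.mul_smul, Matrix.trace_smul,
        Matrix.mul_smul, Matrix.trace_smul]
      have ha : Matrix.trace (E t * (H₀ * E t - E t * H₀)) = 0 := trace_comm_zero _ _
      have hb : Matrix.trace (E t * (H₁ * ρ t - ρ t * H₁)) = -z := by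
        have hb1 : Matrix.trace (ρ t * (H₁ * ρ t - ρ t * H₁)) = 0 := trace_comm_zero _ _
        have hb2 : Matrix.trace (ρd t * (H₁ * ρ t - ρ t * H₁)) = z := by
          rw [hz, Matrix.trace_mul_comm]
        simp only [hE, Matrix.sub_mul, Matrix.trace_sub, hb1, hb2]
        ring
      rw [ha, hb]
      simp [smul_eq_mul]
    have hfz : f t = κ * z.im := by
      rw [hf t]
      congr 1
      rw [Matrix.smul_mul, Matrix.trace_smul]
      simp [hz, Complex.mul_re]
    have hval : (1 / 2 : ℝ) * Complex.reCLM
        (Matrix.trace (E' t * E t) + Matrix.trace (E t * E' t)) = -(f t) ^ 2 / κ := by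
      rw [Matrix.trace_mul_comm (E' t) (E t), key]
      have : Complex.reCLM (Complex.I * (f t : ℂ) * z + Complex.I * (f t : ℂ) * z)
          = -2 * (f t * z.im) := by
        simp [Complex.add_re, Complex.mul_re, Complex.mul_im]
        ring
      rw [this, hfz]
      field_simp
    rw [← hval, hVeq]
    exact h3
  -- V is antitone on ℝ
  have hanti : Antitone V := by
    apply antitone_of_deriv_nonpos (fun x => (derV x).differentiableAt)
    intro x
    rw [(derV x).deriv]
    exact div_nonpos_of_nonpos_of_nonneg (neg_nonpos.mpr (sq_nonneg _)) hκ.le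
  -- hermiticity
  have hermρ : ∀ t, (ρ t).IsHermitian := by
    apply herm_prop (fun t => H₀ + (f t : ℂ) • H₁) _ ρ hρ hρ0
    intro t
    unfold Matrix.IsHermitian
    rw [conjTranspose_add, conjTranspose_smul, hH₀.eq, hH₁.eq]
    congr 1
    simp [Complex.star_def, Complex.conj_ofReal]
  have hermρd : ∀ t, (ρd t).IsHermitian :=
    herm_prop (fun _ => H₀) (fun _ => hH₀) ρd hρd hρd0
  have hermE : ∀ t, (E t).IsHermitian := fun t => (hermρ t).sub (hermρd t)
  -- V nonneg
  have hVnn : ∀ t, 0 ≤ V t := by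
    intro t
    rw [hV t]
    have : (ρ t - ρd t) ^ 2 = (E t)ᴴ * E t := by
      rw [(hermE t).eq, hE, sq]
    rw [this, re_trace_conjTranspose_mul]
    have : (0:ℝ) ≤ ∑ i : Fin n, ∑ j : Fin n, Complex.normSq (E t j i) :=
      Finset.sum_nonneg fun i _ => Finset.sum_nonneg fun j _ => Complex.normSq_nonneg _
    linarith
  refine ⟨hanti.antitoneOn _, fun t _ => hVnn t, ⟨⨅ t, V t, ?_, ?_⟩⟩
  · exact le_ciInf fun t => hVnn t
  · exact tendsto_atTop_ciInf hanti ⟨0, fun y ⟨t, ht⟩ => ht ▸ hVnn t⟩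
end

section
/- Let ρ, ρ_d : ℝ → Matrix (Fin n) (Fin n) ℂ be differentiable and satisfy ρ'(t) = −i[H₀ + f(t)·H₁, ρ(t)] and ρ_d'(t) = −i[H₀, ρ_d(t)], where f(t) = κ·Re(Tr([−iH₁, ρ(t)]·ρ_d(t))) with κ > 0, and suppose ρ(0), ρ_d(0) are Hermitian. Then for every T ≥ 0, ∫₀ᵀ f(t)² dt = κ·(V(0) − V(T)) ≤ κ·V(0), where V(t) = ½ Re(Tr((ρ(t) − ρ_d(t))²)); in particular t ↦ f(t)² is integrable on [0,∞). -/
open Matrix Complex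


private lemma hdA_conj {u : ℝ → ℂ} {u' : ℂ} {t : ℝ} (h : HasDerivAt u u' t) :
    HasDerivAt (fun s => (starRingEnd ℂ) (u s)) ((starRingEnd ℂ) u') t := by
  exact ((Complex.conjCLE.toContinuousLinearMap).hasFDerivAt.comp_hasDerivAt t h)

private lemma hdA_trace_mul {n : ℕ} {X Y : ℝ → Matrix (Fin n) (Fin n) ℂ}
    {X' Y' : Matrix (Fin n) (Fin n) ℂ} {t : ℝ}
    (hX : ∀ i j, HasDerivAt (fun s => X s i j) (X' i j) t)
    (hY : ∀ i j, HasDerivAt (fun s => Y s i j) (Y' i j) t) :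
    HasDerivAt (fun s => Matrix.trace (X s * Y s))
      (Matrix.trace (X' * Y t + X t * Y')) t := by
  have key : ∀ (Z W : Matrix (Fin n) (Fin n) ℂ), Matrix.trace (Z * W) = ∑ i, ∑ k, Z i k * W k i := by
    intro Z W; simp [Matrix.trace, Matrix.mul_apply, Matrix.diag]
  simp only [key, Matrix.trace_add, ← Finset.sum_add_distrib]
  apply HasDerivAt.fun_sum; intro i _
  apply HasDerivAt.fun_sum; intro k _
  exact (hX i k).mul (hY k i)

private lemma herm_of_ode {n : ℕ} (H : ℝ → Matrix (Fin n) (Fin n) ℂ)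
    (hH : ∀ t, (H t).IsHermitian)
    (X : ℝ → Matrix (Fin n) (Fin n) ℂ)
    (hX : ∀ t, ∀ i j, HasDerivAt (fun s => X s i j)
      (((-Complex.I) • (H t * X t - X t * H t)) i j) t)
    (hX0 : (X 0).IsHermitian) : ∀ t, (X t).IsHermitian := by
  set E : ℝ → Matrix (Fin n) (Fin n) ℂ := fun s => X s - (X s)ᴴ with hEdef
  have hmat : ∀ t, ((-Complex.I) • (H t * X t - X t * H t))
      - ((-Complex.I) • (H t * X t - X t * H t))ᴴ
      = (-Complex.I) • (H t * E t - E t * H t) := by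
    intro t
    have h1 : (H t)ᴴ = H t := hH t
    simp only [hEdef, conjTranspose_smul, conjTranspose_sub, conjTranspose_neg, conjTranspose_mul, h1,
      Matrix.mul_sub, Matrix.sub_mul, smul_sub, star_neg, Complex.star_def, Complex.conj_I,
      neg_neg, neg_smul]
    module
  have hE : ∀ t, ∀ i j, HasDerivAt (fun s => E s i j)
      (((-Complex.I) • (H t * E t - E t * H t)) i j) t := by
    intro t i j
    have h1 := (hX t i j).fun_sub (hdA_conj (hX t j i))
    have h2 : (fun s => X s i j - (starRingEnd ℂ) (X s j i)) = fun s => E s i j := by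
      funext s; simp [hEdef, Matrix.sub_apply, Matrix.conjTranspose_apply]
    rw [h2] at h1
    refine h1.congr_deriv ?_
    rw [← hmat t]
    simp [Matrix.sub_apply, Matrix.conjTranspose_apply, Matrix.mul_apply, map_sum, mul_comm]
  have hg : ∀ t, HasDerivAt (fun s => Matrix.trace (E s * E s)) 0 t := by
    intro t
    have h1 := hdA_trace_mul (X := E) (Y := E)
      (X' := (-Complex.I) • (H t * E t - E t * H t))
      (Y' := (-Complex.I) • (H t * E t - E t * H t)) (hE t) (hE t)
    convert h1 using 1
    symm
    simp only [Matrix.smul_mul, Matrix.mul_smul, Matrix.sub_mul, Matrix.mul_sub,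
      Matrix.trace_add, Matrix.trace_smul, Matrix.trace_sub]
    rw [Matrix.trace_mul_comm (E t) (H t * E t), Matrix.trace_mul_comm (E t) (E t * H t),
      Matrix.trace_mul_cycle (E t) (H t) (E t)]
    rw [Matrix.trace_mul_cycle (E t) (E t) (H t)]
    simp
  have hconst : ∀ t, Matrix.trace (E t * E t) = Matrix.trace (E 0 * E 0) := by
    intro t
    apply is_const_of_deriv_eq_zero (f := fun s => Matrix.trace (E s * E s))
    · intro x; exact (hg x).differentiableAt
    · intro x; exact (hg x).deriv
  have hE0 : E 0 = 0 := by simp [hEdef, hX0.eq]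
  intro t
  have htr : Matrix.trace (E t * E t) = 0 := by rw [hconst t, hE0]; simp
  have hskew : ∀ i k, E t k i = -(starRingEnd ℂ) (E t i k) := by
    intro i k
    simp [hEdef, Matrix.sub_apply, Matrix.conjTranspose_apply]
  have hsum : Matrix.trace (E t * E t)
      = -((↑(∑ i, ∑ k, Complex.normSq (E t i k)) : ℂ)) := by
    push_cast
    simp only [Matrix.trace, Matrix.diag, Matrix.mul_apply]
    rw [← Finset.sum_neg_distrib]
    apply Finset.sum_congr rfl; intro i _
    rw [← Finset.sum_neg_distrib]
    apply Finset.sum_congr rfl; intro k _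
    rw [hskew i k, mul_neg, Complex.mul_conj]
  have h2 : (∑ i, ∑ k, Complex.normSq (E t i k)) = 0 := by
    rw [hsum] at htr
    exact_mod_cast neg_eq_zero.mp htr
  have hEt : E t = 0 := by
    ext i k
    have h4 : Complex.normSq (E t i k) = 0 := by
      have hle : Complex.normSq (E t i k) ≤ ∑ i, ∑ k, Complex.normSq (E t i k) := by
        calc Complex.normSq (E t i k) ≤ ∑ k', Complex.normSq (E t i k') :=
              Finset.single_le_sum (fun _ _ => Complex.normSq_nonneg _) (Finset.mem_univ k)
          _ ≤ ∑ i', ∑ k', Complex.normSq (E t i' k') :=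
              Finset.single_le_sum
                (fun i' _ => Finset.sum_nonneg fun _ _ => Complex.normSq_nonneg _)
                (Finset.mem_univ i)
      have := Complex.normSq_nonneg (E t i k)
      linarith [h2]
    simpa using Complex.normSq_eq_zero.mp h4
  exact (sub_eq_zero.mp hEt).symm

private lemma trace_comm_mul_self {n : ℕ} (h x : Matrix (Fin n) (Fin n) ℂ) :
    Matrix.trace ((h * x - x * h) * x) = 0 := by
  rw [Matrix.sub_mul, Matrix.trace_sub, Matrix.trace_mul_cycle h x x]
  ring

private lemma trace_sq_re_nonneg {n : ℕ} {D : Matrix (Fin n) (Fin n) ℂ} (hD : D.IsHermitian) :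
    0 ≤ (Matrix.trace (D * D)).re := by
  have hherm : ∀ i k, D k i = (starRingEnd ℂ) (D i k) := by
    intro i k
    have := congrArg (fun M => M k i) hD.eq
    simpa [Matrix.conjTranspose_apply] using this.symm
  have h2 : Matrix.trace (D * D) = (↑(∑ i, ∑ k, Complex.normSq (D i k)) : ℂ) := by
    push_cast
    simp only [Matrix.trace, Matrix.diag, Matrix.mul_apply]
    apply Finset.sum_congr rfl; intro i _
    apply Finset.sum_congr rfl; intro k _
    rw [hherm i k, Complex.mul_conj]
  rw [h2]
  simpa using Finset.sum_nonneg fun _ _ => Finset.sum_nonneg fun _ _ => Complex.normSq_nonneg _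

/-- With the Lyapunov feedback law and Hermitian initial conditions,
for every `T ≥ 0` one has `∫₀ᵀ f(t)² dt = κ (V(0) - V(T)) ≤ κ V(0)`, where
`V(t) = ½ Re Tr((ρ(t) - ρ_d(t))²)`; in particular `t ↦ f(t)²` is integrable on `[0,∞)`. -/
theorem stmt2 {n : ℕ} (hn : 2 ≤ n) (H₀ H₁ : Matrix (Fin n) (Fin n) ℂ)
    (hH₀ : H₀.IsHermitian) (hH₁ : H₁.IsHermitian)
    (κ : ℝ) (hκ : 0 < κ)
    (ρ ρd : ℝ → Matrix (Fin n) (Fin n) ℂ)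
    (f : ℝ → ℝ)
    (hf : ∀ t, f t =
      κ * (Matrix.trace (((-Complex.I) • (H₁ * ρ t - ρ t * H₁)) * ρd t)).re)
    (hρ : ∀ t, ∀ i j : Fin n, HasDerivAt (fun s => ρ s i j)
      (((-Complex.I) • ((H₀ + (f t : ℂ) • H₁) * ρ t - ρ t * (H₀ + (f t : ℂ) • H₁))) i j) t)
    (hρd : ∀ t, ∀ i j : Fin n, HasDerivAt (fun s => ρd s i j)
      (((-Complex.I) • (H₀ * ρd t - ρd t * H₀)) i j) t)
    (hρ0 : (ρ 0).IsHermitian) (hρd0 : (ρd 0).IsHermitian)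
    (V : ℝ → ℝ)
    (hV : ∀ t, V t = (1 / 2 : ℝ) * (Matrix.trace ((ρ t - ρd t) ^ 2)).re) :
    (∀ T : ℝ, 0 ≤ T →
      (∫ t in (0 : ℝ)..T, (f t) ^ 2) = κ * (V 0 - V T) ∧
      (∫ t in (0 : ℝ)..T, (f t) ^ 2) ≤ κ * V 0) ∧
    MeasureTheory.IntegrableOn (fun t => (f t) ^ 2) (Set.Ici (0 : ℝ)) := by
  -- continuity
  have hcρ : Continuous ρ := continuous_matrix fun i j =>
    continuous_iff_continuousAt.mpr fun t => (hρ t i j).continuousAt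
  have hcρd : Continuous ρd := continuous_matrix fun i j =>
    continuous_iff_continuousAt.mpr fun t => (hρd t i j).continuousAt
  have hfc : Continuous f := by
    have h1 : Continuous fun t =>
        κ * (Matrix.trace (((-Complex.I) • (H₁ * ρ t - ρ t * H₁)) * ρd t)).re :=
      continuous_const.mul (Complex.continuous_re.comp
        (Continuous.matrix_trace (Continuous.matrix_mul
          (((continuous_const.matrix_mul hcρ).sub
            (hcρ.matrix_mul continuous_const)).const_smul (-Complex.I)) hcρd)))
    have h2 : f = fun t =>
        κ * (Matrix.trace (((-Complex.I) • (H₁ * ρ t - ρ t * H₁)) * ρd t)).re := funext hf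
    rw [h2]; exact h1
  -- Hermiticity at all times
  have hHt : ∀ t, (H₀ + (f t : ℂ) • H₁).IsHermitian := by
    intro t
    apply hH₀.add
    show ((f t : ℂ) • H₁)ᴴ = _
    rw [Matrix.conjTranspose_smul, hH₁.eq]
    congr 1
    simp [Complex.star_def, Complex.conj_ofReal]
  have hρherm : ∀ t, (ρ t).IsHermitian :=
    herm_of_ode (fun t => H₀ + (f t : ℂ) • H₁) hHt ρ hρ hρ0
  have hρdherm : ∀ t, (ρd t).IsHermitian :=
    herm_of_ode (fun _ => H₀) (fun _ => hH₀) ρd hρd hρd0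
  -- entrywise derivative of the difference
  have hDent : ∀ t, ∀ i j, HasDerivAt (fun s => (ρ s - ρd s) i j)
      (((((-Complex.I) • ((H₀ + (f t : ℂ) • H₁) * ρ t - ρ t * (H₀ + (f t : ℂ) • H₁)))
        - ((-Complex.I) • (H₀ * ρd t - ρd t * H₀)))) i j) t := by
    intro t i j
    simpa [Matrix.sub_apply] using (hρ t i j).fun_sub (hρd t i j)
  -- derivative of V
  have hVd : ∀ t, HasDerivAt V (-(f t) ^ 2 / κ) t := by
    intro t
    set D' : Matrix (Fin n) (Fin n) ℂ :=
      ((-Complex.I) • ((H₀ + (f t : ℂ) • H₁) * ρ t - ρ t * (H₀ + (f t : ℂ) • H₁)))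
        - ((-Complex.I) • (H₀ * ρd t - ρd t * H₀)) with hD'def
    have h1 : HasDerivAt (fun s => Matrix.trace ((ρ s - ρd s) * (ρ s - ρd s)))
        (Matrix.trace (D' * (ρ t - ρd t) + (ρ t - ρd t) * D')) t :=
      hdA_trace_mul (hDent t) (hDent t)
    -- the key trace identity
    have key : Matrix.trace (D' * (ρ t - ρd t) + (ρ t - ρd t) * D')
        = (-2 * (f t : ℂ)) * Matrix.trace (((-Complex.I) • (H₁ * ρ t - ρ t * H₁)) * ρd t) := by
      set D : Matrix (Fin n) (Fin n) ℂ := ρ t - ρd t with hD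
      have step2 : D' = (-Complex.I) • ((H₀ * D - D * H₀) + (f t : ℂ) • (H₁ * ρ t - ρ t * H₁)) := by
        simp only [hD'def, hD, Matrix.add_mul, Matrix.mul_add, Matrix.sub_mul, Matrix.mul_sub,
          Matrix.smul_mul, Matrix.mul_smul, smul_sub, smul_add]
        module
      rw [Matrix.trace_add, Matrix.trace_mul_comm D D', step2]
      rw [Matrix.smul_mul, Matrix.trace_smul, Matrix.add_mul, Matrix.trace_add,
        trace_comm_mul_self H₀ D, Matrix.smul_mul, Matrix.trace_smul]
      have h3 : Matrix.trace ((H₁ * ρ t - ρ t * H₁) * D)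
          = -Matrix.trace ((H₁ * ρ t - ρ t * H₁) * ρd t) := by
        rw [hD, Matrix.mul_sub, Matrix.trace_sub, trace_comm_mul_self H₁ (ρ t)]
        ring
      rw [h3, Matrix.smul_mul, Matrix.trace_smul]
      simp only [smul_eq_mul]
      ring
    -- pass to real part
    have h2 : HasDerivAt (fun s => (1 / 2 : ℝ) * (Matrix.trace ((ρ s - ρd s) * (ρ s - ρd s))).re)
        ((1 / 2 : ℝ) * (Matrix.trace (D' * (ρ t - ρd t) + (ρ t - ρd t) * D')).re) t := by
      have hre : HasDerivAt (fun s => (Matrix.trace ((ρ s - ρd s) * (ρ s - ρd s))).re)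
          ((Matrix.trace (D' * (ρ t - ρd t) + (ρ t - ρd t) * D')).re) t := by
        simpa [Function.comp_def] using (Complex.reCLM.hasFDerivAt.comp_hasDerivAt t h1)
      exact hre.const_mul _
    have hVfun : V = fun s => (1 / 2 : ℝ) * (Matrix.trace ((ρ s - ρd s) * (ρ s - ρd s))).re := by
      funext s; rw [hV s, sq]
    rw [hVfun]
    convert h2 using 1
    rw [key]
    have hcast : (-2 * (f t : ℂ)) = ((-2 * f t : ℝ) : ℂ) := by push_cast; ring
    rw [hcast, Complex.re_ofReal_mul]
    have hz : (Matrix.trace (((-Complex.I) • (H₁ * ρ t - ρ t * H₁)) * ρd t)).re = f t / κ := by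
      rw [hf t]; field_simp
    rw [hz]
    field_simp
  -- nonnegativity of V
  have hVnonneg : ∀ t, 0 ≤ V t := by
    intro t
    rw [hV t, sq]
    have := trace_sq_re_nonneg ((hρherm t).sub (hρdherm t))
    positivity
  -- main integral identity
  have hmain : ∀ T : ℝ, (∫ t in (0 : ℝ)..T, (f t) ^ 2) = κ * (V 0 - V T) := by
    intro T
    have hint : IntervalIntegrable (fun t => -(f t) ^ 2 / κ) MeasureTheory.volume 0 T :=
      (((hfc.pow 2).neg.div_const κ)).intervalIntegrable 0 T
    have hFTC : (∫ t in (0 : ℝ)..T, (-(f t) ^ 2 / κ)) = V T - V 0 :=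
      intervalIntegral.integral_eq_sub_of_hasDerivAt (fun t _ => hVd t) hint
    have heq : (∫ t in (0 : ℝ)..T, (f t) ^ 2)
        = -κ * ∫ t in (0 : ℝ)..T, (-(f t) ^ 2 / κ) := by
      rw [← intervalIntegral.integral_const_mul]
      apply intervalIntegral.integral_congr
      intro x _
      field_simp
    rw [heq, hFTC]
    ring
  have hbdd : ∀ T : ℝ, (∫ t in (0 : ℝ)..T, (f t) ^ 2) ≤ κ * V 0 := by
    intro T
    rw [hmain T]
    have := hVnonneg T
    nlinarith
  refine ⟨fun T _ => ⟨hmain T, hbdd T⟩, ?_⟩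
  rw [integrableOn_Ici_iff_integrableOn_Ioi]
  apply MeasureTheory.integrableOn_Ioi_of_intervalIntegral_norm_bounded (κ * V 0) 0
    (b := fun N : ℕ => (N : ℝ)) (l := Filter.atTop)
  · intro i
    exact (intervalIntegrable_iff_integrableOn_Ioc_of_le (by positivity)).mp
      ((hfc.pow 2).intervalIntegrable 0 i)
  · exact tendsto_natCast_atTop_atTop
  · apply Filter.Eventually.of_forall
    intro N
    have hnorm : (∫ x in (0 : ℝ)..(N : ℝ), ‖(f x) ^ 2‖) = ∫ x in (0 : ℝ)..(N : ℝ), (f x) ^ 2 := by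
      apply intervalIntegral.integral_congr
      intro x _
      exact Real.norm_of_nonneg (sq_nonneg _)
    rw [hnorm]
    exact hbdd _
end

section
/- Let H₀ = diag(a₁,…,aₙ) be a real diagonal n×n matrix that is strongly regular, and let H₁ be an n×n Hermitian matrix with zero diagonal that is fully connected. If M is an n×n complex matrix such that Tr(M · Ad^m_{−iH₀}(−iH₁)) = 0 for every nonnegative integer m, then M is diagonal. -/
open Matrix Complex

/-- `Ad^m_{-iH₀}(-iH₁)`: the `m`-fold iterate of `X ↦ [-iH₀, X]` applied to `-iH₁`. -/
noncomputable def adIter {n : ℕ} (H₀ H₁ : Matrix (Fin n) (Fin n) ℂ) (m : ℕ) :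
    Matrix (Fin n) (Fin n) ℂ :=
  (fun X : Matrix (Fin n) (Fin n) ℂ =>
      ((-Complex.I) • H₀) * X - X * ((-Complex.I) • H₀))^[m] ((-Complex.I) • H₁)

lemma vand_aux {ι : Type*} [Fintype ι] (x c : ι → ℂ) (hx : Function.Injective x)
    (h : ∀ m : ℕ, ∑ i, c i * x i ^ m = 0) : ∀ i, c i = 0 := by
  classical
  let e := (Fintype.equivFin ι).symm
  have h2 : (c ∘ e) = 0 := by
    apply Matrix.eq_zero_of_forall_pow_sum_mul_pow_eq_zero (f := x ∘ e)
      (hx.comp e.injective)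
    intro i
    have := Equiv.sum_comp e (fun j => c j * x j ^ (i : ℕ))
    simpa [Function.comp] using this.trans (h i)
  intro i
  have := congrFun h2 (e.symm i)
  simpa [e] using this

lemma adIter_apply {n : ℕ} (a : Fin n → ℝ) (H₁ : Matrix (Fin n) (Fin n) ℂ) (m : ℕ)
    (k ℓ : Fin n) :
    adIter (Matrix.diagonal fun i => (a i : ℂ)) H₁ m k ℓ =
      ((-Complex.I) * ((a k : ℂ) - a ℓ)) ^ m * ((-Complex.I) * H₁ k ℓ) := by
  induction m with
  | zero => simp [adIter]
  | succ m ih =>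
    unfold adIter at ih ⊢
    rw [Function.iterate_succ_apply']
    set X := (fun X : Matrix (Fin n) (Fin n) ℂ =>
      ((-Complex.I) • (Matrix.diagonal fun i => (a i : ℂ))) * X -
        X * ((-Complex.I) • (Matrix.diagonal fun i => (a i : ℂ))))^[m]
        ((-Complex.I) • H₁) with hX
    simp only [Matrix.sub_apply, Matrix.smul_mul, Matrix.mul_smul, Matrix.smul_apply,
      Matrix.diagonal_mul, Matrix.mul_diagonal, smul_eq_mul]
    rw [ih]
    ring

/-- If `H₀ = diag(a₁,…,aₙ)` is strongly regular
(`ω_{kℓ} = a_ℓ - a_k` pairwise distinct over pairs `k ≠ ℓ`) and `H₁` is Hermitian,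
zero-diagonal and fully connected, then any matrix `M` with
`Tr(M · Ad^m_{-iH₀}(-iH₁)) = 0` for every `m ≥ 0` is diagonal. -/
theorem stmt5 {n : ℕ} (a : Fin n → ℝ)
    (hreg : ∀ k ℓ p q : Fin n, k ≠ ℓ → p ≠ q →
      a ℓ - a k = a q - a p → k = p ∧ ℓ = q)
    (H₁ : Matrix (Fin n) (Fin n) ℂ) (hH₁ : H₁.IsHermitian)
    (hH₁diag : ∀ k : Fin n, H₁ k k = 0)
    (hconn : ∀ k ℓ : Fin n, k ≠ ℓ → H₁ k ℓ ≠ 0)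
    (M : Matrix (Fin n) (Fin n) ℂ)
    (hM : ∀ m : ℕ,
      Matrix.trace (M * adIter (Matrix.diagonal fun i => (a i : ℂ)) H₁ m) = 0) :
    M.IsDiag := by
  classical
  set ι := {p : Fin n × Fin n // p.1 ≠ p.2} with hι
  set x : ι → ℂ := fun p => (-Complex.I) * ((a p.1.2 : ℂ) - a p.1.1) with hx
  set c : ι → ℂ := fun p => M p.1.1 p.1.2 * ((-Complex.I) * H₁ p.1.2 p.1.1) with hc
  have hxinj : Function.Injective x := by
    intro p q hpq
    have hI : (-Complex.I) ≠ 0 := by simp [Complex.I_ne_zero]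
    have h1 : ((a p.1.2 : ℂ) - a p.1.1) = ((a q.1.2 : ℂ) - a q.1.1) :=
      mul_left_cancel₀ hI hpq
    have h2 : a p.1.2 - a p.1.1 = a q.1.2 - a q.1.1 := by
      exact_mod_cast h1
    obtain ⟨h3, h4⟩ := hreg p.1.1 p.1.2 q.1.1 q.1.2 p.2 q.2 h2
    exact Subtype.ext (Prod.ext h3 h4)
  have hsum : ∀ m : ℕ, ∑ i, c i * x i ^ m = 0 := by
    intro m
    have htr := hM m
    rw [Matrix.trace] at htr
    have hexp : ∑ i : ι, c i * x i ^ m =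
        ∑ p ∈ (Finset.univ : Finset (Fin n × Fin n)).filter (fun p => p.1 ≠ p.2),
          M p.1 p.2 * ((-Complex.I) * ((a p.2 : ℂ) - a p.1)) ^ m *
            ((-Complex.I) * H₁ p.2 p.1) := by
      rw [Finset.sum_subtype (p := fun p : Fin n × Fin n => p.1 ≠ p.2)
        ((Finset.univ : Finset (Fin n × Fin n)).filter (fun p => p.1 ≠ p.2))
        (by simp)
        (fun p : Fin n × Fin n => M p.1 p.2 * ((-Complex.I) * ((a p.2 : ℂ) - a p.1)) ^ m *
            ((-Complex.I) * H₁ p.2 p.1))]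
      apply Finset.sum_congr rfl
      intro i _
      simp only [hc, hx]
      ring
    have hfull : ∑ p ∈ (Finset.univ : Finset (Fin n × Fin n)).filter (fun p => p.1 ≠ p.2),
          M p.1 p.2 * ((-Complex.I) * ((a p.2 : ℂ) - a p.1)) ^ m *
            ((-Complex.I) * H₁ p.2 p.1) =
        ∑ p : Fin n × Fin n,
          M p.1 p.2 * ((-Complex.I) * ((a p.2 : ℂ) - a p.1)) ^ m *
            ((-Complex.I) * H₁ p.2 p.1) := by
      apply Finset.sum_filter_of_ne
      intro p _ hne
      intro hdiag
      apply hne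
      rw [hdiag] at *
      simp [hH₁diag p.2] at hne ⊢
    rw [hexp, hfull, Fintype.sum_prod_type]
    rw [← htr]
    apply Finset.sum_congr rfl
    intro k _
    simp only [Matrix.diag_apply, Matrix.mul_apply]
    apply Finset.sum_congr rfl
    intro ℓ _
    rw [adIter_apply]
    ring
  have hc0 := vand_aux x c hxinj hsum
  intro k ℓ hkl
  have h := hc0 ⟨(k, ℓ), hkl⟩
  simp only [hc] at h
  rcases mul_eq_zero.mp h with h1 | h2
  · exact h1
  · exfalso
    rcases mul_eq_zero.mp h2 with h3 | h4
    · exact Complex.I_ne_zero (by simpa using h3)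
    · exact hconn ℓ k (Ne.symm hkl) h4
end

section
/- Let H₀ be a real diagonal n×n matrix, H₁ an n×n Hermitian matrix with zero diagonal, and ρ_d a real diagonal n×n matrix. For any permutation σ of {1,…,n}, let ρ_d^{(σ)} be the diagonal matrix obtained by permuting the diagonal entries of ρ_d by σ. Then the constant function ρ(t) = ρ_d^{(σ)} is a solution of the closed-loop system ρ'(t) = −i[H₀ + f(ρ(t))·H₁, ρ(t)] with f(ρ) = κ·Re(Tr([−iH₁, ρ]·ρ_d)); that is, f(ρ_d^{(σ)}) = 0 and [H₀, ρ_d^{(σ)}] = 0. -/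
open Matrix Complex

/-- For `H₀` real diagonal, `H₁` Hermitian with zero diagonal, and a
real diagonal target `ρ_d`, every permutation `ρ_d^{(σ)}` of the diagonal entries
of `ρ_d` yields a constant solution of the closed-loop system
`ρ' = -i[H₀ + f(ρ)H₁, ρ]`, `f(ρ) = κ Re Tr([-iH₁, ρ] ρ_d)`:
namely `f(ρ_d^{(σ)}) = 0` and `[H₀, ρ_d^{(σ)}] = 0`. -/
theorem stmt10 {n : ℕ} (a : Fin n → ℝ) (H₀ H₁ : Matrix (Fin n) (Fin n) ℂ)
    (hH₀ : H₀ = Matrix.diagonal fun k => (a k : ℂ))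
    (hH₁ : H₁.IsHermitian) (hH₁diag : ∀ k : Fin n, H₁ k k = 0)
    (w : Fin n → ℝ) (ρd : Matrix (Fin n) (Fin n) ℂ)
    (hρd : ρd = Matrix.diagonal fun k => (w k : ℂ))
    (κ : ℝ) (hκ : 0 < κ)
    (f : Matrix (Fin n) (Fin n) ℂ → ℝ)
    (hf : ∀ ρ, f ρ =
      κ * (Matrix.trace (((-Complex.I) • (H₁ * ρ - ρ * H₁)) * ρd)).re)
    (σ : Equiv.Perm (Fin n)) :
    f (Matrix.diagonal fun k => (w (σ k) : ℂ)) = 0 ∧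
    H₀ * (Matrix.diagonal fun k => (w (σ k) : ℂ))
      - (Matrix.diagonal fun k => (w (σ k) : ℂ)) * H₀ = 0 := by
  constructor
  · rw [hf, hρd]
    have htr : Matrix.trace (((-Complex.I) • (H₁ * (Matrix.diagonal fun k => (w (σ k) : ℂ))
        - (Matrix.diagonal fun k => (w (σ k) : ℂ)) * H₁)) * (Matrix.diagonal fun k => (w k : ℂ))) = 0 := by
      rw [Matrix.trace]
      apply Finset.sum_eq_zero
      intro k _
      simp [Matrix.diag, Matrix.mul_apply, Matrix.diagonal, Finset.mul_sum,
        Finset.sum_mul, hH₁diag, Finset.sum_ite_eq, Finset.sum_ite_eq',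
        mul_comm, mul_assoc, mul_left_comm]
    rw [htr]
    simp
  · rw [hH₀]
    rw [Matrix.diagonal_mul_diagonal, Matrix.diagonal_mul_diagonal]
    simp [mul_comm]
end

section
/- Let ρ_d = diag(w₁,…,wₙ) with w₁ ≥ w₂ ≥ … ≥ wₙ real, and let ρ = U ρ_d U* for some n×n unitary matrix U. Then Σ_{k=1}^n w_k·w_{n+1−k} ≤ Re(Tr(ρ · ρ_d)) ≤ Σ_{k=1}^n w_k². -/
open Matrix Finset

lemma rev_rearrange {n : ℕ} (w : Fin n → ℝ) (hw : Antitone w) (σ : Equiv.Perm (Fin n)) :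
    (∑ k : Fin n, w k * w k.rev) ≤ ∑ k : Fin n, w k * w (σ k) := by
  have hav : Antivary w (w ∘ Fin.rev) := by
    intro i j h
    simp only [Function.comp] at h
    have h1 : Fin.rev j < Fin.rev i := by
      by_contra hle
      push_neg at hle
      exact absurd (hw hle) (not_le.2 h)
    have h2 : i < j := by
      rwa [Fin.rev_lt_rev] at h1
    exact hw h2.le
  have := hav.sum_mul_le_sum_mul_comp_perm (σ := σ.trans Fin.revPerm)
  simpa [Fin.rev_rev] using this

lemma perm_entry {n : ℕ} (σ : Equiv.Perm (Fin n)) (j k : Fin n) :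
    (σ.permMatrix ℝ) j k = if σ j = k then 1 else 0 := by
  simp [Equiv.Perm.permMatrix, PEquiv.toMatrix_apply, Equiv.toPEquiv_apply, Option.mem_def, eq_comm]

/-- For `ρ_d = diag(w₁,…,wₙ)` with `w₁ ≥ … ≥ wₙ` real and
`ρ = U ρ_d U*` unitary, one has
`Σ_k w_k w_{n+1-k} ≤ Re Tr(ρ ρ_d) ≤ Σ_k w_k²`. -/
theorem stmt11 {n : ℕ} (w : Fin n → ℝ) (hw : Antitone w)
    (ρd ρ : Matrix (Fin n) (Fin n) ℂ)
    (hρd : ρd = Matrix.diagonal fun k => (w k : ℂ))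
    (U : Matrix (Fin n) (Fin n) ℂ) (hU : U ∈ Matrix.unitaryGroup (Fin n) ℂ)
    (hρ : ρ = U * ρd * star U) :
    (∑ k : Fin n, w k * w k.rev) ≤ (Matrix.trace (ρ * ρd)).re ∧
    (Matrix.trace (ρ * ρd)).re ≤ ∑ k : Fin n, (w k) ^ 2 := by
  classical
  set B : Matrix (Fin n) (Fin n) ℝ := fun j k => Complex.normSq (U j k) with hB
  -- trace formula
  have key : (Matrix.trace (ρ * ρd)).re = ∑ j, ∑ k, B j k * (w j * w k) := by
    subst hρ hρd
    have e : Matrix.trace (U * Matrix.diagonal (fun k => (w k : ℂ)) * star U *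
        Matrix.diagonal (fun k => (w k : ℂ)))
        = ((∑ j, ∑ k, B j k * (w j * w k) : ℝ) : ℂ) := by
      rw [Matrix.trace]
      simp only [Matrix.diag, Matrix.mul_apply, Matrix.diagonal_apply, Matrix.star_apply,
        Matrix.conjTranspose_apply, mul_ite, mul_zero, ite_mul, zero_mul,
        Finset.sum_ite_eq, Finset.sum_ite_eq', Finset.mem_univ, if_true]
      push_cast
      apply Finset.sum_congr rfl
      intro j _
      rw [Finset.sum_mul]
      apply Finset.sum_congr rfl
      intro k _
      rw [hB]
      rw [show (U j k * (w k : ℂ) * star (U j k) * (w j : ℂ))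
          = (U j k * star (U j k)) * ((w j : ℂ) * (w k : ℂ)) by ring]
      rw [Complex.star_def, Complex.mul_conj]
    rw [e, Complex.ofReal_re]
  -- row and column sums
  have hrow : ∀ j, ∑ k, B j k = 1 := by
    intro j
    have h1 : (U * star U) j j = 1 := by
      rw [(Matrix.mem_unitaryGroup_iff).1 hU]
      simp
    have h2 : (U * star U) j j = ∑ k, (Complex.normSq (U j k) : ℂ) := by
      simp [Matrix.mul_apply, Matrix.star_apply, Matrix.conjTranspose_apply,
        Complex.mul_conj, Complex.normSq_eq_norm_sq]
    rw [h2] at h1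
    have := congrArg Complex.re h1
    simpa [Complex.ofReal_sum] using this
  have hcol : ∀ k, ∑ j, B j k = 1 := by
    intro k
    have h1 : (star U * U) k k = 1 := by
      rw [(Matrix.mem_unitaryGroup_iff').1 hU]
      simp
    have h2 : (star U * U) k k = ∑ j, (Complex.normSq (U j k) : ℂ) := by
      simp [Matrix.mul_apply, Matrix.star_apply, Matrix.conjTranspose_apply,
        Complex.mul_conj', mul_comm, Complex.normSq_eq_norm_sq]
    rw [h2] at h1
    have := congrArg Complex.re h1
    simpa [Complex.ofReal_sum] using this
  have hBnn : ∀ j k, 0 ≤ B j k := fun j k => Complex.normSq_nonneg _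
  have hBds : B ∈ doublyStochastic ℝ (Fin n) :=
    mem_doublyStochastic_iff_sum.2 ⟨hBnn, hrow, hcol⟩
  rw [key]
  constructor
  · -- lower bound via Birkhoff
    obtain ⟨c, hc0, hc1, hcB⟩ := exists_eq_sum_perm_of_mem_doublyStochastic hBds
    have hmain : ∑ j, ∑ k, B j k * (w j * w k)
        = ∑ σ : Equiv.Perm (Fin n), c σ * ∑ j, w j * w (σ j) := by
      have step1 : ∀ σ : Equiv.Perm (Fin n), c σ * ∑ j, w j * w (σ j)
          = ∑ j, ∑ k, c σ * (σ.permMatrix ℝ) j k * (w j * w k) := by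
        intro σ
        rw [Finset.mul_sum]
        apply Finset.sum_congr rfl
        intro j _
        simp only [perm_entry, mul_ite, mul_one, mul_zero, ite_mul, zero_mul]
        rw [Finset.sum_ite_eq Finset.univ (σ j) (fun k => c σ * (w j * w k))]
        simp
      rw [← hcB]
      simp only [Matrix.sum_apply, Matrix.smul_apply, smul_eq_mul, Finset.sum_mul]
      simp only [step1]
      exact (Finset.sum_congr rfl fun j _ => Finset.sum_comm).trans Finset.sum_comm
    rw [hmain]
    calc (∑ k : Fin n, w k * w k.rev)
        = ∑ σ : Equiv.Perm (Fin n), c σ * (∑ k : Fin n, w k * w k.rev) := by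
          rw [← Finset.sum_mul, hc1, one_mul]
      _ ≤ ∑ σ : Equiv.Perm (Fin n), c σ * ∑ j, w j * w (σ j) := by
          apply Finset.sum_le_sum
          intro σ _
          exact mul_le_mul_of_nonneg_left (rev_rearrange w hw σ) (hc0 σ)
  · -- upper bound via AM-GM
    have e1 : ∑ j, ∑ k, B j k * w j ^ 2 = ∑ j, w j ^ 2 := by
      apply Finset.sum_congr rfl
      intro j _
      rw [← Finset.sum_mul, hrow, one_mul]
    have e2 : ∑ j, ∑ k, B j k * w k ^ 2 = ∑ k, w k ^ 2 := by
      rw [Finset.sum_comm]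
      apply Finset.sum_congr rfl
      intro k _
      rw [← Finset.sum_mul, hcol, one_mul]
    have expand : ∑ j, ∑ k, B j k * ((w j ^ 2 + w k ^ 2) / 2)
        = ((∑ j, ∑ k, B j k * w j ^ 2) + ∑ j, ∑ k, B j k * w k ^ 2) / 2 := by
      rw [← Finset.sum_add_distrib, Finset.sum_div]
      apply Finset.sum_congr rfl
      intro j _
      rw [← Finset.sum_add_distrib, Finset.sum_div]
      apply Finset.sum_congr rfl
      intro k _
      ring
    calc ∑ j, ∑ k, B j k * (w j * w k)
        ≤ ∑ j, ∑ k, B j k * ((w j ^ 2 + w k ^ 2) / 2) := by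
          apply Finset.sum_le_sum; intro j _
          apply Finset.sum_le_sum; intro k _
          apply mul_le_mul_of_nonneg_left _ (hBnn j k)
          nlinarith [sq_nonneg (w j - w k)]
      _ = ∑ k : Fin n, (w k) ^ 2 := by
          rw [expand, e1, e2]; ring
end

section
/- Let ρ₁ and ρ₂ be 2×2 density matrices that are unitarily equivalent and not equal to (1/2)·I. Then the commutator [ρ₁, ρ₂] is a diagonal matrix if and only if at least one of the following holds: (a) ρ₁ = ρ₂; (b) ρ₁ + ρ₂ = I; (c) both diagonal entries of ρ₁ equal 1/2 and both diagonal entries of ρ₂ equal 1/2. -/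
open Matrix
open scoped ComplexOrder

private lemma ext_two {M N : Matrix (Fin 2) (Fin 2) ℂ} (h00 : M 0 0 = N 0 0)
    (h01 : M 0 1 = N 0 1) (h10 : M 1 0 = N 1 0) (h11 : M 1 1 = N 1 1) : M = N := by
  ext i j
  fin_cases i <;> fin_cases j
  · exact h00
  · exact h01
  · exact h10
  · exact h11

private lemma isDiag_fin_two {M : Matrix (Fin 2) (Fin 2) ℂ} :
    M.IsDiag ↔ M 0 1 = 0 ∧ M 1 0 = 0 := by
  constructor
  · intro h; exact ⟨h (by decide), h (by decide)⟩
  · rintro ⟨h1, h2⟩ i j hij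
    fin_cases i <;> fin_cases j <;> simp_all

private lemma key13 (A C P R : ℝ) (b q : ℂ)
    (hAC : A + C = 1) (hPR : P + R = 1)
    (hdet : A * C - Complex.normSq b = P * R - Complex.normSq q)
    (h1 : ¬ (A = 1/2 ∧ b = 0)) (h2 : ¬ (P = 1/2 ∧ q = 0))
    (hcomm : q * ((A : ℂ) - C) = b * ((P : ℂ) - R)) :
    (A = P ∧ b = q) ∨ (A + P = 1 ∧ b + q = 0) ∨
      (A = 1/2 ∧ C = 1/2 ∧ P = 1/2 ∧ R = 1/2) := by
  have hcomm' : q * ((A - C : ℝ) : ℂ) = b * ((P - R : ℝ) : ℂ) := by push_cast; exact hcomm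
  have hns : Complex.normSq q * (A - C)^2 = Complex.normSq b * (P - R)^2 := by
    have h0 := congrArg Complex.normSq hcomm'
    rw [Complex.normSq_mul, Complex.normSq_mul, Complex.normSq_ofReal, Complex.normSq_ofReal] at h0
    linear_combination h0
  by_cases hd1 : A - C = 0
  · by_cases hd2 : P - R = 0
    · exact Or.inr (Or.inr ⟨by linarith, by linarith, by linarith, by linarith⟩)
    · exfalso
      have hb : b = 0 := by
        have : b * ((P - R : ℝ) : ℂ) = 0 := by rw [← hcomm', hd1]; push_cast; ring
        rcases mul_eq_zero.mp this with h | h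
        · exact h
        · exact absurd (by exact_mod_cast h) hd2
      exact h1 ⟨by linarith, hb⟩
  · have key2 : ((A - C)^2 - (P - R)^2) * (Complex.normSq q + (P - R)^2 / 4) = 0 := by
      linear_combination hns - (P - R)^2 * hdet + (P - R)^2 * (A + C + 1) / 4 * hAC
        - (P - R)^2 * (P + R + 1) / 4 * hPR
    rcases mul_eq_zero.mp key2 with h | h
    · have hsq : (A - C - (P - R)) * (A - C + (P - R)) = 0 := by nlinarith [h]
      rcases mul_eq_zero.mp hsq with h' | h'
      · -- A - C = P - R
        refine Or.inl ⟨by linarith, ?_⟩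
        have he : P - R = A - C := by linarith
        rw [he] at hcomm'
        exact mul_right_cancel₀ (Complex.ofReal_ne_zero.mpr hd1) hcomm'.symm
      · -- A - C = -(P - R)
        refine Or.inr (Or.inl ⟨by linarith, ?_⟩)
        have he : P - R = -(A - C) := by linarith
        rw [he, Complex.ofReal_neg] at hcomm'
        have hz : (b + q) * ((A - C : ℝ) : ℂ) = 0 := by linear_combination hcomm'
        rcases mul_eq_zero.mp hz with h'' | h''
        · exact h''
        · exact absurd (by exact_mod_cast h'') hd1
    · exfalso
      have hq0 : Complex.normSq q = 0 ∧ (P - R)^2 = 0 := by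
        constructor <;> nlinarith [Complex.normSq_nonneg q, sq_nonneg (P - R)]
      have hq : q = 0 := Complex.normSq_eq_zero.mp hq0.1
      have : P = 1/2 := by nlinarith [hq0.2]
      exact h2 ⟨this, hq⟩

/-- For unitarily equivalent 2×2 density matrices `ρ₁, ρ₂`, neither
equal to `(1/2)I`, the commutator `[ρ₁, ρ₂]` is diagonal iff `ρ₁ = ρ₂`, or
`ρ₁ + ρ₂ = I`, or all diagonal entries of `ρ₁` and `ρ₂` equal `1/2`. -/
theorem stmt13 (ρ₁ ρ₂ : Matrix (Fin 2) (Fin 2) ℂ)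
    (h₁pos : ρ₁.PosSemidef) (h₁tr : Matrix.trace ρ₁ = 1)
    (h₂pos : ρ₂.PosSemidef) (h₂tr : Matrix.trace ρ₂ = 1)
    (hunit : ∃ U ∈ Matrix.unitaryGroup (Fin 2) ℂ, ρ₁ = U * ρ₂ * star U)
    (h₁ne : ρ₁ ≠ (1 / 2 : ℂ) • (1 : Matrix (Fin 2) (Fin 2) ℂ))
    (h₂ne : ρ₂ ≠ (1 / 2 : ℂ) • (1 : Matrix (Fin 2) (Fin 2) ℂ)) :
    (ρ₁ * ρ₂ - ρ₂ * ρ₁).IsDiag ↔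
      (ρ₁ = ρ₂ ∨ ρ₁ + ρ₂ = 1 ∨
        (ρ₁ 0 0 = 1 / 2 ∧ ρ₁ 1 1 = 1 / 2 ∧ ρ₂ 0 0 = 1 / 2 ∧ ρ₂ 1 1 = 1 / 2)) := by
  have h₁h := h₁pos.1
  have h₂h := h₂pos.1
  -- hermitian entry facts
  have e₁ : ρ₁ 1 0 = (starRingEnd ℂ) (ρ₁ 0 1) := (h₁h.apply 1 0).symm
  have e₂ : ρ₂ 1 0 = (starRingEnd ℂ) (ρ₂ 0 1) := (h₂h.apply 1 0).symm
  have ra : ρ₁ 0 0 = ((ρ₁ 0 0).re : ℂ) := (Complex.conj_eq_iff_re.mp (h₁h.apply 0 0)).symm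
  have rc : ρ₁ 1 1 = ((ρ₁ 1 1).re : ℂ) := (Complex.conj_eq_iff_re.mp (h₁h.apply 1 1)).symm
  have rp : ρ₂ 0 0 = ((ρ₂ 0 0).re : ℂ) := (Complex.conj_eq_iff_re.mp (h₂h.apply 0 0)).symm
  have rr : ρ₂ 1 1 = ((ρ₂ 1 1).re : ℂ) := (Complex.conj_eq_iff_re.mp (h₂h.apply 1 1)).symm
  set A := (ρ₁ 0 0).re with hA
  set C := (ρ₁ 1 1).re with hC
  set P := (ρ₂ 0 0).re with hP
  set R := (ρ₂ 1 1).re with hR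
  set b := ρ₁ 0 1 with hb
  set q := ρ₂ 0 1 with hq
  -- traces
  have tr₁ : (A : ℂ) + C = 1 := by rw [← ra, ← rc, ← Matrix.trace_fin_two]; exact h₁tr
  have tr₂ : (P : ℂ) + R = 1 := by rw [← rp, ← rr, ← Matrix.trace_fin_two]; exact h₂tr
  have hAC : A + C = 1 := by exact_mod_cast tr₁
  have hPR : P + R = 1 := by exact_mod_cast tr₂
  -- determinant equality
  obtain ⟨U, hU, hρ⟩ := hunit
  have hdetC : ρ₁.det = ρ₂.det := by
    have h1 : U.det * (star U).det = 1 := by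
      rw [← Matrix.det_mul, Matrix.mem_unitaryGroup_iff.mp hU, Matrix.det_one]
    rw [hρ, Matrix.det_mul, Matrix.det_mul]
    calc U.det * ρ₂.det * (star U).det = U.det * (star U).det * ρ₂.det := by ring
    _ = ρ₂.det := by rw [h1, one_mul]
  have hdet : A * C - Complex.normSq b = P * R - Complex.normSq q := by
    have h1 : ρ₁.det = (A : ℂ) * C - (Complex.normSq b : ℂ) := by
      rw [Matrix.det_fin_two, e₁, ← ra, ← rc, Complex.mul_conj]
    have h2 : ρ₂.det = (P : ℂ) * R - (Complex.normSq q : ℂ) := by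
      rw [Matrix.det_fin_two, e₂, ← rp, ← rr, Complex.mul_conj]
    have := h1 ▸ h2 ▸ hdetC
    exact_mod_cast this
  -- nondegeneracy
  have h1 : ¬ (A = 1/2 ∧ b = 0) := by
    rintro ⟨hA2, hb0⟩
    apply h₁ne
    have ha2 : ρ₁ 0 0 = 1/2 := by rw [ra, hA2]; norm_num
    have hc2 : ρ₁ 1 1 = 1/2 := by
      rw [rc]
      have : C = 1/2 := by linarith
      rw [this]; norm_num
    refine ext_two ?_ ?_ ?_ ?_
    · rw [ha2]; norm_num [Matrix.one_apply]
    · rw [← hb, hb0]; norm_num [Matrix.one_apply]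
    · rw [e₁, hb0]; norm_num [Matrix.one_apply]
    · rw [hc2]; norm_num [Matrix.one_apply]
  have h2 : ¬ (P = 1/2 ∧ q = 0) := by
    rintro ⟨hP2, hq0⟩
    apply h₂ne
    have hp2 : ρ₂ 0 0 = 1/2 := by rw [rp, hP2]; norm_num
    have hr2 : ρ₂ 1 1 = 1/2 := by
      rw [rr]
      have : R = 1/2 := by linarith
      rw [this]; norm_num
    refine ext_two ?_ ?_ ?_ ?_
    · rw [hp2]; norm_num [Matrix.one_apply]
    · rw [← hq, hq0]; norm_num [Matrix.one_apply]
    · rw [e₂, hq0]; norm_num [Matrix.one_apply]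
    · rw [hr2]; norm_num [Matrix.one_apply]
  -- the off-diagonal entry of the commutator
  have hC01 : (ρ₁ * ρ₂ - ρ₂ * ρ₁) 0 1
      = q * ((A : ℂ) - C) - b * ((P : ℂ) - R) := by
    simp only [Matrix.sub_apply, Matrix.mul_apply, Fin.sum_univ_two]
    rw [← ra, ← rc, ← rp, ← rr]; ring
  have hC10 : (ρ₁ * ρ₂ - ρ₂ * ρ₁) 1 0
      = -((starRingEnd ℂ) q * ((A : ℂ) - C) - (starRingEnd ℂ) b * ((P : ℂ) - R)) := by
    simp only [Matrix.sub_apply, Matrix.mul_apply, Fin.sum_univ_two]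
    rw [e₁, e₂, ← ra, ← rc, ← rp, ← rr]; ring
  constructor
  · intro hdiag
    have h01 : q * ((A : ℂ) - C) = b * ((P : ℂ) - R) := by
      have := (isDiag_fin_two.mp hdiag).1
      rw [hC01] at this
      exact sub_eq_zero.mp this
    rcases key13 A C P R b q hAC hPR hdet h1 h2 h01 with ⟨hap, hbq⟩ | ⟨hap, hbq⟩ | ⟨x1, x2, x3, x4⟩
    · left
      have hcr : (C : ℂ) = R := by
        have : C = R := by linarith [hAC, hPR, hap]
        exact_mod_cast this
      refine ext_two ?_ ?_ ?_ ?_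
      · rw [ra, rp]; exact_mod_cast hap
      · rw [← hb, ← hq]; exact hbq
      · rw [e₁, e₂, hbq]
      · rw [rc, rr, hcr]
    · right; left
      have hcr : (C : ℂ) + R = 1 := by
        have : C + R = 1 := by linarith [hAC, hPR, hap]
        exact_mod_cast this
      refine ext_two ?_ ?_ ?_ ?_
      · rw [Matrix.add_apply, Matrix.one_apply_eq, ra, rp]; exact_mod_cast hap
      · rw [Matrix.add_apply, Matrix.one_apply_ne (by decide), ← hb, ← hq]; exact hbq
      · rw [Matrix.add_apply, Matrix.one_apply_ne (by decide), e₁, e₂, ← map_add, hbq]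
        simp
      · rw [Matrix.add_apply, Matrix.one_apply_eq, rc, rr]; exact_mod_cast hcr
    · right; right
      refine ⟨?_, ?_, ?_, ?_⟩
      · rw [ra, x1]; norm_num
      · rw [rc, x2]; norm_num
      · rw [rp, x3]; norm_num
      · rw [rr, x4]; norm_num
  · rintro (h | h | ⟨y1, y2, y3, y4⟩)
    · rw [h, sub_self]; exact Matrix.isDiag_zero
    · have h2' : ρ₂ = 1 - ρ₁ := by rw [← h]; abel
      have : ρ₁ * ρ₂ - ρ₂ * ρ₁ = 0 := by rw [h2']; noncomm_ring
      rw [this]; exact Matrix.isDiag_zero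
    · refine isDiag_fin_two.mpr ⟨?_, ?_⟩
      · rw [hC01]
        have hAc : (A : ℂ) = C := by rw [← ra, ← rc, y1, y2]
        have hPc : (P : ℂ) = R := by rw [← rp, ← rr, y3, y4]
        rw [hAc, hPc]; ring
      · rw [hC10]
        have hAc : (A : ℂ) = C := by rw [← ra, ← rc, y1, y2]
        have hPc : (P : ℂ) = R := by rw [← rp, ← rr, y3, y4]
        rw [hAc, hPc]; ring
end
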